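/- arXiv:0807.3105 — 3 statements merged into one kernel-verified Lean document; each statement's English description precedes it below -/
import Mathlib

section
/- Let 0 → M → S → N → 0 be a short exact sequence of k[G̃]-modules. Then this sequence is split if and only if the restricted short exact sequence 0 → Res_G M → Res_G S → Res_G N → 0 of k[G]-modules (obtained by restricting the same maps to k[G]-module homomorphisms) is split. -/
/-!
STATEMENT 0: Let `0 → M → S → N → 0` be a short exact sequence of `k[G̃]`-modules.
Then this sequence is split if and only if the restricted short exact sequence
`0 → Res_G M → Res_G S → Res_G N → 0` of `k[G]`-modules (obtained by restricting the
same maps to `k[G]`-module homomorphisms) is split.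

Context: `k` is an algebraically closed field of prime characteristic `p`; `G̃` is a
finite group with a normal subgroup `G` such that the quotient `G̃/G` has order coprime
to `p`.  Restriction along the inclusion `k[G] → k[G̃]` is encoded via
`Module.compHom` along `MonoidAlgebra.mapDomainRingHom k G.subtype`.
-/

theorem broue_split_iff_restriction_split
    (k : Type*) [Field k] [IsAlgClosed k] (p : ℕ) [Fact p.Prime] [CharP k p]
    (Gt : Type*) [Group Gt] [Fintype Gt] (G : Subgroup Gt) [G.Normal]
    (hp : (Nat.card (Gt ⧸ G)).Coprime p)
    (M S N : Type*) [AddCommGroup M] [AddCommGroup S] [AddCommGroup N]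
    [Module (MonoidAlgebra k Gt) M] [Module (MonoidAlgebra k Gt) S]
    [Module (MonoidAlgebra k Gt) N]
    [Module.Finite (MonoidAlgebra k Gt) M] [Module.Finite (MonoidAlgebra k Gt) S]
    [Module.Finite (MonoidAlgebra k Gt) N]
    (α : M →ₗ[MonoidAlgebra k Gt] S) (β : S →ₗ[MonoidAlgebra k Gt] N)
    (hα : Function.Injective α) (hβ : Function.Surjective β)
    (hexact : Function.Exact α β) :
    (∃ γ : N →ₗ[MonoidAlgebra k Gt] S, β ∘ₗ γ = LinearMap.id) ↔
      (letI : Module (MonoidAlgebra k ↥G) S :=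
        Module.compHom S (MonoidAlgebra.mapDomainRingHom k G.subtype)
       letI : Module (MonoidAlgebra k ↥G) N :=
        Module.compHom N (MonoidAlgebra.mapDomainRingHom k G.subtype)
       ∃ γ : N →ₗ[MonoidAlgebra k ↥G] S, ∀ n : N, β (γ n) = n) := by
  classical
  letI : Module (MonoidAlgebra k ↥G) S :=
    Module.compHom S (MonoidAlgebra.mapDomainRingHom k G.subtype)
  letI : Module (MonoidAlgebra k ↥G) N :=
    Module.compHom N (MonoidAlgebra.mapDomainRingHom k G.subtype)
  show (∃ γ : N →ₗ[MonoidAlgebra k Gt] S, β ∘ₗ γ = LinearMap.id) ↔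
    (∃ γ : N →ₗ[MonoidAlgebra k ↥G] S, ∀ n : N, β (γ n) = n)
  have hsmulS : ∀ (a : MonoidAlgebra k ↥G) (s : S),
      a • s = (MonoidAlgebra.mapDomainRingHom k G.subtype a) • s := fun _ _ => rfl
  have hsmulN : ∀ (a : MonoidAlgebra k ↥G) (n : N),
      a • n = (MonoidAlgebra.mapDomainRingHom k G.subtype a) • n := fun _ _ => rfl
  constructor
  · rintro ⟨γ, hγ⟩
    refine ⟨{ toFun := γ, map_add' := γ.map_add, map_smul' := ?_ }, fun n => ?_⟩
    · intro a n
      rw [RingHom.id_apply, hsmulN, hsmulS]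
      exact γ.map_smul _ n
    · exact LinearMap.congr_fun hγ n
  · rintro ⟨γ, hγ⟩
    letI : Fintype (Gt ⧸ G) := Fintype.ofFinite (Gt ⧸ G)
    set og : Gt → MonoidAlgebra k Gt := fun g => MonoidAlgebra.of k Gt g with hog
    have hmulS : ∀ (x y : Gt) (s : S), og x • og y • s = og (x * y) • s := by
      intro x y s; rw [← mul_smul, hog, ← map_mul]
    have hmulN : ∀ (x y : Gt) (n : N), og x • og y • n = og (x * y) • n := by
      intro x y n; rw [← mul_smul, hog, ← map_mul]
    -- equivariance of γ under elements of G
    have hγG : ∀ (g : Gt), g ∈ G → ∀ n : N, γ (og g • n) = og g • γ n := by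
      intro g hg n
      have h1 := γ.map_smul (MonoidAlgebra.of k ↥G ⟨g, hg⟩) n
      rw [hsmulN, hsmulS] at h1
      have h2 : (MonoidAlgebra.mapDomainRingHom k G.subtype) (MonoidAlgebra.of k ↥G ⟨g, hg⟩)
          = MonoidAlgebra.of k Gt g := by
        simp [MonoidAlgebra.mapDomainRingHom, MonoidAlgebra.of_apply]
      rw [h2] at h1
      exact h1
    -- equivariance of γ under scalars from k
    have hγk : ∀ (r : k) (n : N),
        γ ((algebraMap k (MonoidAlgebra k Gt) r) • n)
          = (algebraMap k (MonoidAlgebra k Gt) r) • γ n := by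
      intro r n
      have h1 := γ.map_smul (algebraMap k (MonoidAlgebra k ↥G) r) n
      rw [hsmulN, hsmulS] at h1
      have h2 : (MonoidAlgebra.mapDomainRingHom k G.subtype)
          (algebraMap k (MonoidAlgebra k ↥G) r) = algebraMap k (MonoidAlgebra k Gt) r := by
        simpa [MonoidAlgebra.mapDomainRingHom_apply] using
          MonoidAlgebra.mapDomain_algebraMap k G.subtype r
      rwa [h2] at h1
    have hcentralS : ∀ (r : k) (x : MonoidAlgebra k Gt) (s : S),
        x • (algebraMap k (MonoidAlgebra k Gt) r) • s
          = (algebraMap k (MonoidAlgebra k Gt) r) • x • s := by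
      intro r x s; rw [← mul_smul, ← mul_smul, ← Algebra.commutes]
    have hcentralN : ∀ (r : k) (x : MonoidAlgebra k Gt) (n : N),
        x • (algebraMap k (MonoidAlgebra k Gt) r) • n
          = (algebraMap k (MonoidAlgebra k Gt) r) • x • n := by
      intro r x n; rw [← mul_smul, ← mul_smul, ← Algebra.commutes]
    set c : k := ((Nat.card (Gt ⧸ G) : k))⁻¹ with hc
    set σ : N → S := fun n =>
      (algebraMap k (MonoidAlgebra k Gt) c) •
        ∑ q : Gt ⧸ G, og q.out • γ (og q.out⁻¹ • n) with hσ
    have hσadd : ∀ n₁ n₂, σ (n₁ + n₂) = σ n₁ + σ n₂ := by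
      intro n₁ n₂
      simp only [hσ, smul_add, map_add, Finset.sum_add_distrib]
    -- group equivariance of the averaged sum
    have key : ∀ (h : Gt) (n : N),
        (∑ q : Gt ⧸ G, og q.out • γ (og q.out⁻¹ • (og h • n)))
          = og h • ∑ q : Gt ⧸ G, og q.out • γ (og q.out⁻¹ • n) := by
      intro h n
      rw [Finset.smul_sum]
      refine Fintype.sum_equiv (Equiv.mulLeft ((h⁻¹ : Gt) : Gt ⧸ G)) _ _ ?_
      intro q
      set a := q.out with ha
      set b := (((h⁻¹ : Gt) : Gt ⧸ G) * q).out with hb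
      have hmk : ((h⁻¹ * a : Gt) : Gt ⧸ G) = (b : Gt ⧸ G) := by
        have h1 : ((a : Gt) : Gt ⧸ G) = q := QuotientGroup.out_eq' q
        have h2 : ((b : Gt) : Gt ⧸ G) = ((h⁻¹ : Gt) : Gt ⧸ G) * q :=
          QuotientGroup.out_eq' _
        rw [h2, QuotientGroup.mk_mul, h1]
      have hgmem : b⁻¹ * (h⁻¹ * a) ∈ G := by
        rw [← QuotientGroup.eq]; exact hmk.symm
      set g := b⁻¹ * (h⁻¹ * a) with hgdef
      have hab : a = h * b * g := by rw [hgdef]; group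
      show og a • γ (og a⁻¹ • (og h • n))
          = og h • (og b • γ (og b⁻¹ • n))
      have h2 : a⁻¹ * h = g⁻¹ * b⁻¹ := by rw [hab]; group
      rw [hmulN, h2, ← hmulN g⁻¹ b⁻¹ n, hγG g⁻¹ (inv_mem hgmem), hmulS, hmulS h b]
      have h3 : a * g⁻¹ = h * b := by rw [hab]; group
      rw [h3]
    have hσalg : ∀ (r : k) (n : N),
        σ ((algebraMap k (MonoidAlgebra k Gt) r) • n)
          = (algebraMap k (MonoidAlgebra k Gt) r) • σ n := by
      intro r n
      simp only [hσ]
      have hterm : ∀ q : Gt ⧸ G,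
          og q.out • γ (og q.out⁻¹ • (algebraMap k (MonoidAlgebra k Gt) r) • n)
            = (algebraMap k (MonoidAlgebra k Gt) r) • (og q.out • γ (og q.out⁻¹ • n)) := by
        intro q
        rw [hcentralN, hγk, hcentralS]
      rw [Finset.sum_congr rfl (fun q _ => hterm q), ← Finset.smul_sum, hcentralS]
    have hσsmul : ∀ (r : MonoidAlgebra k Gt) (n : N), σ (r • n) = r • σ n := by
      intro r
      induction r using MonoidAlgebra.induction_on with
      | of h =>
        intro n
        simp only [hσ]
        rw [key h n, ← mul_smul, ← mul_smul, Algebra.commutes]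
      | add f g hf hg =>
        intro n
        rw [add_smul, add_smul, hσadd, hf, hg]
      | smul r f hf =>
        intro n
        rw [Algebra.smul_def, mul_smul, mul_smul, hσalg, hf]
    have hcard0 : ((Nat.card (Gt ⧸ G) : k)) ≠ 0 := by
      intro h
      exact ((Fact.out : p.Prime).coprime_iff_not_dvd.mp hp.symm)
        ((CharP.cast_eq_zero_iff k p _).mp h)
    refine ⟨{ toFun := σ, map_add' := hσadd, map_smul' := fun r n => hσsmul r n }, ?_⟩
    apply LinearMap.ext
    intro n
    show β (σ n) = n
    simp only [hσ]
    rw [map_smul, map_sum]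
    have hterm : ∀ q : Gt ⧸ G, β (og q.out • γ (og q.out⁻¹ • n)) = n := by
      intro q
      rw [map_smul, hγ, ← mul_smul, hog, ← map_mul, mul_inv_cancel, map_one, one_smul]
    rw [Finset.sum_congr rfl (fun q _ => hterm q), Finset.sum_const, Finset.card_univ]
    rw [← Nat.cast_smul_eq_nsmul (MonoidAlgebra k Gt), ← map_natCast (algebraMap k (MonoidAlgebra k Gt)),
      ← mul_smul, ← map_mul, ← Nat.card_eq_fintype_card, hc,
      inv_mul_cancel₀ hcard0, map_one, one_smul]
end

section
/- Every simple k[G]-module S, when induced up to G̃, gives a semisimple k[G̃]-module; that is, Ind_G^{G̃} S is a semisimple k[G̃]-module. -/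
/-!
STATEMENT 1: Every simple `k[G]`-module `S`, when induced up to `G̃`, gives a semisimple
`k[G̃]`-module; that is, `Ind_G^{G̃} S` is a semisimple `k[G̃]`-module.

Context: `k` is an algebraically closed field of prime characteristic `p`; `G̃` is a
finite group with a normal subgroup `G` such that `G̃/G` has order coprime to `p`.
The induced module `Ind_G^{G̃} S = k[G̃] ⊗_{k[G]} S` is realised as the quotient of the
`k`-tensor product `k[G̃] ⊗_k S` by the `k[G̃]`-submodule generated by the balancing
relations `(x · a) ⊗ s - x ⊗ (a • s)` for `a ∈ k[G]`.
-/

open MonoidAlgebra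

noncomputable def IndRel (k : Type*) [Field k] {Gt : Type*} [Group Gt] (G : Subgroup Gt)
    (S : Type*) [AddCommGroup S] [Module k S] [Module (MonoidAlgebra k ↥G) S]
    [IsScalarTower k (MonoidAlgebra k ↥G) S] :
    Submodule (MonoidAlgebra k Gt) (TensorProduct k (MonoidAlgebra k Gt) S) :=
  Submodule.span (MonoidAlgebra k Gt)
    {z | ∃ (x : MonoidAlgebra k Gt) (a : MonoidAlgebra k ↥G) (s : S),
      z = (x * mapDomainRingHom k G.subtype a) ⊗ₜ[k] s - x ⊗ₜ[k] (a • s)}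

noncomputable def Ind (k : Type*) [Field k] {Gt : Type*} [Group Gt] (G : Subgroup Gt)
    (S : Type*) [AddCommGroup S] [Module k S] [Module (MonoidAlgebra k ↥G) S]
    [IsScalarTower k (MonoidAlgebra k ↥G) S] :=
  TensorProduct k (MonoidAlgebra k Gt) S ⧸ IndRel k G S

noncomputable instance (k : Type*) [Field k] {Gt : Type*} [Group Gt] (G : Subgroup Gt)
    (S : Type*) [AddCommGroup S] [Module k S] [Module (MonoidAlgebra k ↥G) S]
    [IsScalarTower k (MonoidAlgebra k ↥G) S] : AddCommGroup (Ind k G S) :=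
  Submodule.Quotient.addCommGroup _

noncomputable instance (k : Type*) [Field k] {Gt : Type*} [Group Gt] (G : Subgroup Gt)
    (S : Type*) [AddCommGroup S] [Module k S] [Module (MonoidAlgebra k ↥G) S]
    [IsScalarTower k (MonoidAlgebra k ↥G) S] : Module (MonoidAlgebra k Gt) (Ind k G S) :=
  Submodule.Quotient.module _

section Setup
variable (k : Type*) [Field k] {Gt : Type*} [Group Gt] (G : Subgroup Gt)
    (S : Type*) [AddCommGroup S] [Module k S] [Module (MonoidAlgebra k ↥G) S]
    [IsScalarTower k (MonoidAlgebra k ↥G) S]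

noncomputable instance : Module k (Ind k G S) :=
  Submodule.Quotient.module' _

instance : IsScalarTower k (MonoidAlgebra k Gt) (Ind k G S) := by
  constructor
  intro c r m
  obtain ⟨z, rfl⟩ := Submodule.Quotient.mk_surjective _ m
  change (c • r) • (Submodule.Quotient.mk z : TensorProduct k (MonoidAlgebra k Gt) S ⧸ IndRel k G S)
    = c • r • (Submodule.Quotient.mk z : TensorProduct k (MonoidAlgebra k Gt) S ⧸ IndRel k G S)
  rw [← Submodule.Quotient.mk_smul, ← Submodule.Quotient.mk_smul, ← Submodule.Quotient.mk_smul,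
    smul_assoc]

/-- The A-module structure on `Ind k G S` by restriction. -/
noncomputable instance : Module (MonoidAlgebra k ↥G) (Ind k G S) :=
  Module.compHom _ (mapDomainRingHom k G.subtype)

variable {k G S}

lemma resSmul_def (a : MonoidAlgebra k ↥G) (m : Ind k G S) :
    a • m = (mapDomainRingHom k G.subtype a) • m := rfl

/-- mk as the quotient map. -/
noncomputable def IndMk (z : TensorProduct k (MonoidAlgebra k Gt) S) : Ind k G S :=
  Submodule.Quotient.mk z

lemma indMk_surjective : Function.Surjective (IndMk (k := k) (G := G) (S := S)) :=
  Submodule.Quotient.mk_surjective _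

lemma indMk_add (z w : TensorProduct k (MonoidAlgebra k Gt) S) :
    IndMk (G := G) (z + w) = IndMk z + IndMk w := rfl

lemma indMk_smul (r : MonoidAlgebra k Gt) (z : TensorProduct k (MonoidAlgebra k Gt) S) :
    IndMk (G := G) (r • z) = r • IndMk z :=
  Submodule.Quotient.mk_smul _ _ _

lemma indMk_smul_k (c : k) (z : TensorProduct k (MonoidAlgebra k Gt) S) :
    IndMk (G := G) (c • z) = c • IndMk z :=
  Submodule.Quotient.mk_smul _ _ _

/-- The balancing relation in the quotient. -/
lemma indMk_rel (x : MonoidAlgebra k Gt) (a : MonoidAlgebra k ↥G) (s : S) :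
    IndMk (G := G) ((x * mapDomainRingHom k G.subtype a) ⊗ₜ[k] s) = IndMk (x ⊗ₜ[k] (a • s)) := by
  rw [IndMk, IndMk]
  refine (Submodule.Quotient.eq _).mpr ?_
  exact Submodule.subset_span ⟨x, a, s, rfl⟩

lemma smul_indMk_tmul (r x : MonoidAlgebra k Gt) (s : S) :
    r • IndMk (G := G) (x ⊗ₜ[k] s) = IndMk ((r * x) ⊗ₜ[k] s) := by
  rw [← indMk_smul, TensorProduct.smul_tmul', smul_eq_mul]

end Setup

section Conj
variable {k : Type*} [Field k] {Gt : Type*} [Group Gt] {G : Subgroup Gt} [G.Normal]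

/-- Conjugation by `t⁻¹` as a monoid hom `G →* G`. -/
def conjHom (t : Gt) : ↥G →* ↥G where
  toFun g := ⟨t⁻¹ * ↑g * t, by
    simpa using Subgroup.Normal.conj_mem ‹G.Normal› ↑g g.2 t⁻¹⟩
  map_one' := by ext; simp
  map_mul' g h := by ext; simp [mul_assoc]

lemma conjHom_apply (t : Gt) (g : ↥G) : ((conjHom t g : ↥G) : Gt) = t⁻¹ * ↑g * t := rfl

variable (S : Type*) [AddCommGroup S] [Module k S] [Module (MonoidAlgebra k ↥G) S]
    [IsScalarTower k (MonoidAlgebra k ↥G) S]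

/-- Key commutation: `f a * of t = of t * f (conj_t a)` in `k[Gt]`. -/
lemma map_mul_of (t : Gt) (a : MonoidAlgebra k ↥G) :
    mapDomainRingHom k G.subtype a * MonoidAlgebra.of k Gt t
      = MonoidAlgebra.of k Gt t * mapDomainRingHom k G.subtype (mapDomainRingHom k (conjHom t) a) := by
  induction a using MonoidAlgebra.induction with
  | zero => simp
  | single_add g c a' _ _ ih =>
      rw [map_add, map_add, add_mul, map_add, mul_add, ih]
      congr 1
      show (mapDomainRingHom k G.subtype) (MonoidAlgebra.single g c) * _ = _
      have h1 : (mapDomainRingHom k G.subtype) (MonoidAlgebra.single g c)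
          = MonoidAlgebra.single (↑g : Gt) c := by
        simp [mapDomainRingHom, MonoidAlgebra.mapDomain_single]
      have h2 : (mapDomainRingHom k (conjHom t)) (MonoidAlgebra.single g c)
          = MonoidAlgebra.single (conjHom t g) c := by
        simp [mapDomainRingHom, MonoidAlgebra.mapDomain_single]
      rw [h1, h2]
      have h3 : (mapDomainRingHom k G.subtype) (MonoidAlgebra.single (conjHom t g) c)
          = MonoidAlgebra.single (t⁻¹ * ↑g * t) c := by
        simp [mapDomainRingHom, MonoidAlgebra.mapDomain_single, conjHom_apply]
      rw [h3, MonoidAlgebra.of_apply, MonoidAlgebra.single_mul_single,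
        MonoidAlgebra.single_mul_single]
      simp [mul_assoc]

end Conj

section Clifford
variable {k : Type*} [Field k] {Gt : Type*} [Group Gt] {G : Subgroup Gt} [G.Normal]
    {S : Type*} [AddCommGroup S] [Module k S] [Module (MonoidAlgebra k ↥G) S]
    [IsScalarTower k (MonoidAlgebra k ↥G) S]

/-- The action of `a : k[G]` on the class of `t ⊗ s`. -/
lemma resSmul_indMk_tmul (t : Gt) (a : MonoidAlgebra k ↥G) (s : S) :
    a • IndMk (G := G) ((MonoidAlgebra.of k Gt t) ⊗ₜ[k] s)
      = IndMk ((MonoidAlgebra.of k Gt t) ⊗ₜ[k] ((mapDomainRingHom k (conjHom t) a) • s)) := by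
  rw [resSmul_def, smul_indMk_tmul, map_mul_of, indMk_rel]

/-- The image of `S` under `s ↦ [t ⊗ s]`, an `k[G]`-submodule of `Ind k G S`. -/
noncomputable def cliffordPiece (t : Gt) : Submodule (MonoidAlgebra k ↥G) (Ind k G S) where
  carrier := Set.range fun s : S => IndMk (G := G) ((MonoidAlgebra.of k Gt t) ⊗ₜ[k] s)
  add_mem' := by
    rintro _ _ ⟨s, rfl⟩ ⟨s', rfl⟩
    refine ⟨s + s', ?_⟩
    show IndMk _ = IndMk _ + IndMk _
    rw [TensorProduct.tmul_add, indMk_add]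
  zero_mem' := by
    refine ⟨0, ?_⟩
    show IndMk _ = (0 : Ind k G S)
    rw [TensorProduct.tmul_zero]
    rfl
  smul_mem' := by
    rintro a _ ⟨s, rfl⟩
    exact ⟨(mapDomainRingHom k (conjHom t) a) • s, (resSmul_indMk_tmul t a s).symm⟩

lemma mem_cliffordPiece (t : Gt) (s : S) :
    IndMk (G := G) ((MonoidAlgebra.of k Gt t) ⊗ₜ[k] s) ∈ cliffordPiece (S := S) t :=
  ⟨s, rfl⟩

variable [IsSimpleModule (MonoidAlgebra k ↥G) S]

/-- The conjugation ring hom on `k[G]` is surjective. -/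
lemma conjRingHom_surjective (t : Gt) :
    Function.Surjective (mapDomainRingHom k (conjHom (G := G) t)) := by
  intro a
  refine ⟨mapDomainRingHom k (conjHom t⁻¹) a, ?_⟩
  show ((mapDomainRingHom k (conjHom t)).comp (mapDomainRingHom k (conjHom t⁻¹))) a = a
  have h1 : (conjHom (G := G) t).comp (conjHom t⁻¹) = MonoidHom.id _ := by
    ext g
    simp [conjHom_apply, mul_assoc]
  calc ((mapDomainRingHom k (conjHom t)).comp (mapDomainRingHom k (conjHom t⁻¹))) a
      = mapDomainRingHom k ((conjHom t).comp (conjHom t⁻¹)) a := by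
        rw [mapDomainRingHom_comp]
    _ = a := by
        have h2 : ((conjHom (G := G) t) : ↥G → ↥G) ∘ (conjHom t⁻¹) = id := by
          funext g; exact DFunLike.congr_fun h1 g
        rw [h1, mapDomainRingHom_id]
        rfl

/-- The preimage of a `k[G]`-submodule `P ≤ cliffordPiece t` inside `S`. -/
noncomputable def cliffordPullback (t : Gt) (P : Submodule (MonoidAlgebra k ↥G) (Ind k G S)) :
    Submodule (MonoidAlgebra k ↥G) S where
  carrier := {s : S | IndMk (G := G) ((MonoidAlgebra.of k Gt t) ⊗ₜ[k] s) ∈ P}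
  add_mem' := by
    intro s s' hs hs'
    show IndMk _ ∈ P
    rw [TensorProduct.tmul_add, indMk_add]
    exact add_mem hs hs'
  zero_mem' := by
    show IndMk _ ∈ P
    have : (MonoidAlgebra.of k Gt t) ⊗ₜ[k] (0 : S) = 0 := TensorProduct.tmul_zero _ _
    rw [this]
    exact zero_mem P
  smul_mem' := by
    intro a s hs
    show IndMk _ ∈ P
    obtain ⟨b, rfl⟩ := conjRingHom_surjective (G := G) t a
    rw [← resSmul_indMk_tmul]
    exact P.smul_mem b hs

lemma cliffordPiece_bot_or_atom (t : Gt) :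
    cliffordPiece (k := k) (G := G) (S := S) t = ⊥
      ∨ IsAtom (cliffordPiece (k := k) (G := G) (S := S) t) := by
  by_cases hbot : cliffordPiece (k := k) (G := G) (S := S) t = ⊥
  · exact Or.inl hbot
  refine Or.inr ⟨hbot, fun P hP => ?_⟩
  by_contra hPne
  obtain ⟨x, hxP, hx0⟩ := (Submodule.ne_bot_iff P).mp hPne
  obtain ⟨s, rfl⟩ := hP.le hxP
  have hsQ : s ∈ cliffordPullback t P := hxP
  have hs0 : s ≠ 0 := by
    rintro rfl
    apply hx0
    show IndMk _ = (0 : Ind k G S)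
    rw [TensorProduct.tmul_zero]
    rfl
  have hQtop : cliffordPullback t P = ⊤ := by
    rcases eq_bot_or_eq_top (cliffordPullback t P) with h | h
    · exact absurd (h ▸ hsQ) (by simp [hs0])
    · exact h
  refine absurd (le_antisymm hP.le ?_) hP.ne
  rintro _ ⟨s', rfl⟩
  exact (hQtop ▸ Submodule.mem_top : s' ∈ cliffordPullback t P)

/-- `Ind k G S` restricted to `k[G]` is semisimple. -/
lemma isSemisimpleModule_res :
    IsSemisimpleModule (MonoidAlgebra k ↥G) (Ind k G S) := by
  apply IsSemisimpleModule.of_sSup_simples_eq_top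
  rw [eq_top_iff]
  have hle : ∀ t : Gt, cliffordPiece (k := k) (G := G) (S := S) t
      ≤ sSup { m : Submodule (MonoidAlgebra k ↥G) (Ind k G S) | IsSimpleModule (MonoidAlgebra k ↥G) m } := by
    intro t
    rcases cliffordPiece_bot_or_atom (k := k) (G := G) (S := S) t with h | h
    · rw [h]; exact bot_le
    · exact le_sSup (isSimpleModule_iff_isAtom.mpr h)
  intro m _
  obtain ⟨z, rfl⟩ := indMk_surjective (G := G) (S := S) m
  have key : ∀ z : TensorProduct k (MonoidAlgebra k Gt) S, IndMk (G := G) z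
      ∈ sSup { m : Submodule (MonoidAlgebra k ↥G) (Ind k G S) | IsSimpleModule (MonoidAlgebra k ↥G) m } := by
    intro z
    induction z using TensorProduct.induction_on with
    | zero => exact zero_mem _
    | add a b ha hb => rw [indMk_add]; exact add_mem ha hb
    | tmul x s =>
        induction x using MonoidAlgebra.induction with
        | zero =>
            have : (0 : MonoidAlgebra k Gt) ⊗ₜ[k] s = 0 := TensorProduct.zero_tmul _ _
            rw [this]; exact zero_mem _
        | single_add g c x' _ _ ih =>
            rw [TensorProduct.add_tmul, indMk_add]
            refine add_mem ?_ ih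
            apply hle g
            have hsingle : (MonoidAlgebra.single (g : Gt) c)
                = MonoidAlgebra.of k Gt g * mapDomainRingHom k G.subtype
                    (MonoidAlgebra.single (1 : ↥G) c) := by
              have : (mapDomainRingHom k G.subtype) (MonoidAlgebra.single (1 : ↥G) c)
                  = MonoidAlgebra.single ((1 : ↥G) : Gt) c := by
                simp [mapDomainRingHom, MonoidAlgebra.mapDomain_single]
              rw [this, MonoidAlgebra.of_apply, MonoidAlgebra.single_mul_single]
              simp
            have hmem : IndMk (G := G) ((MonoidAlgebra.of k Gt g *
                mapDomainRingHom k G.subtype (MonoidAlgebra.single (1 : ↥G) c)) ⊗ₜ[k] s)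
                ∈ cliffordPiece (k := k) (G := G) (S := S) g := by
              rw [indMk_rel]
              exact mem_cliffordPiece g _
            convert hmem using 3
  exact key z

end Clifford

section Maschke
variable {k : Type*} [Field k] {Gt : Type*} [Group Gt] {G : Subgroup Gt} [G.Normal]
    {S : Type*} [AddCommGroup S] [Module k S] [Module (MonoidAlgebra k ↥G) S]
    [IsScalarTower k (MonoidAlgebra k ↥G) S]

/-- The `k`-linear action of `g : Gt` on `Ind k G S`. -/
noncomputable def rho (g : Gt) : Ind k G S →ₗ[k] Ind k G S where
  toFun m := MonoidAlgebra.of k Gt g • m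
  map_add' m m' := smul_add _ _ _
  map_smul' c m := by
    simp only [RingHom.id_apply]
    rw [← algebraMap_smul (MonoidAlgebra k Gt) c m, smul_smul, ← Algebra.commutes, ← smul_smul,
      algebraMap_smul]

lemma rho_apply (g : Gt) (m : Ind k G S) :
    rho (G := G) (S := S) g m = MonoidAlgebra.of k Gt g • m := rfl

lemma rho_rho (g g' : Gt) (m : Ind k G S) :
    rho (G := G) g (rho (G := G) g' m) = rho (G := G) (g * g') m := by
  rw [rho_apply, rho_apply, rho_apply, smul_smul, ← map_mul]

lemma rho_inv_self (g : Gt) (m : Ind k G S) :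
    rho (G := G) g (rho (G := G) g⁻¹ m) = m := by
  rw [rho_rho, mul_inv_cancel]
  show (MonoidAlgebra.of k Gt 1 : MonoidAlgebra k Gt) • m = m
  rw [map_one, one_smul]

/-- Membership in an `R`-submodule is preserved by `rho`. -/
lemma rho_mem (N : Submodule (MonoidAlgebra k Gt) (Ind k G S)) (g : Gt) {m : Ind k G S}
    (hm : m ∈ N) : rho (G := G) g m ∈ N := N.smul_mem _ hm

/-- `k[G]`-linear endomorphisms commute with `rho h` for `h ∈ G`. -/
lemma rho_comm_linear (π : Ind k G S →ₗ[MonoidAlgebra k ↥G] Ind k G S) (h : ↥G)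
    (m : Ind k G S) : π (rho (G := G) (↑h) m) = rho (G := G) (↑h) (π m) := by
  have key : ∀ m : Ind k G S,
      (MonoidAlgebra.single h (1 : k) : MonoidAlgebra k ↥G) • m
        = rho (G := G) (↑h : Gt) m := by
    intro m
    rw [rho_apply, resSmul_def]
    congr 1
    rw [MonoidAlgebra.of_apply]
    show MonoidAlgebra.mapDomain _ _ = _
    rw [MonoidAlgebra.mapDomain_single]
    rfl
  rw [← key, ← key, map_smul]

end Maschke

section Helper
variable {k : Type*} [Field k] {Gt : Type*} [Group Gt] {G : Subgroup Gt} [G.Normal]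
    {S : Type*} [AddCommGroup S] [Module k S] [Module (MonoidAlgebra k ↥G) S]
    [IsScalarTower k (MonoidAlgebra k ↥G) S]

omit [G.Normal] in
lemma resSmul_algebraMap (cc : k) (m : Ind k G S) :
    (algebraMap k (MonoidAlgebra k ↥G) cc) • m = cc • m := by
  rw [resSmul_def]
  have h1 : (mapDomainRingHom k G.subtype) (algebraMap k (MonoidAlgebra k ↥G) cc)
      = algebraMap k (MonoidAlgebra k Gt) cc := by
    have e1 : algebraMap k (MonoidAlgebra k ↥G) cc = MonoidAlgebra.single (1 : ↥G) cc := by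
      rw [MonoidAlgebra.coe_algebraMap]
      rfl
    have e2 : algebraMap k (MonoidAlgebra k Gt) cc = MonoidAlgebra.single (1 : Gt) cc := by
      rw [MonoidAlgebra.coe_algebraMap]
      rfl
    rw [e1, e2]
    show MonoidAlgebra.mapDomain _ _ = _
    rw [MonoidAlgebra.mapDomain_single]
    rfl
  rw [h1, algebraMap_smul]

end Helper

theorem isSemisimpleModule_ind_of_isSimpleModule
    (k : Type*) [Field k] [IsAlgClosed k] (p : ℕ) [Fact p.Prime] [CharP k p]
    (Gt : Type*) [Group Gt] [Fintype Gt] (G : Subgroup Gt) [G.Normal]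
    (hp : (Nat.card (Gt ⧸ G)).Coprime p)
    (S : Type*) [AddCommGroup S] [Module k S] [Module (MonoidAlgebra k ↥G) S]
    [IsScalarTower k (MonoidAlgebra k ↥G) S]
    [IsSimpleModule (MonoidAlgebra k ↥G) S] :
    IsSemisimpleModule (MonoidAlgebra k Gt) (Ind k G S) := by
  haveI hres := isSemisimpleModule_res (k := k) (G := G) (S := S)
  haveI : Fintype (Gt ⧸ G) := Fintype.ofFinite _
  have hc0 : ((Nat.card (Gt ⧸ G) : ℕ) : k) ≠ 0 := by
    intro h
    have hdvd : p ∣ Nat.card (Gt ⧸ G) := (CharP.cast_eq_zero_iff k p _).mp h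
    exact ((Nat.Prime.coprime_iff_not_dvd Fact.out).mp hp.symm) hdvd
  refine (isSemisimpleModule_iff _ _).mpr <| (complementedLattice_iff _).mpr fun N => ?_
  -- view `N` as a `k[G]`-submodule
  let N' : Submodule (MonoidAlgebra k ↥G) (Ind k G S) :=
    { carrier := N
      add_mem' := fun h1 h2 => N.add_mem h1 h2
      zero_mem' := N.zero_mem
      smul_mem' := fun a m hm => by
        show (mapDomainRingHom k G.subtype a) • m ∈ N
        exact N.smul_mem _ hm }
  obtain ⟨Q, hQ⟩ := exists_isCompl N'
  set π : Ind k G S →ₗ[MonoidAlgebra k ↥G] Ind k G S :=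
    N'.subtype ∘ₗ N'.linearProjOfIsCompl Q hQ with hπ
  have hπmem : ∀ m, π m ∈ N := fun m => (N'.linearProjOfIsCompl Q hQ m).2
  have hπfix : ∀ m ∈ N, π m = m := by
    intro m hm
    show ↑(N'.linearProjOfIsCompl Q hQ m) = m
    rw [show m = ↑(⟨m, hm⟩ : N') from rfl]
    exact congrArg Subtype.val (Submodule.projectionOnto_apply_left hQ _)
  -- the `k`-linear version of `π`
  set πk : Ind k G S →ₗ[k] Ind k G S :=
    { toFun := π
      map_add' := π.map_add
      map_smul' := fun cc m => by
        simp only [RingHom.id_apply]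
        rw [← resSmul_algebraMap (G := G) cc m, π.map_smul, resSmul_algebraMap] } with hπk
  have hπk_apply : ∀ m, πk m = π m := fun _ => rfl
  -- the averaged projection
  set E : Ind k G S →ₗ[k] Ind k G S :=
    ((Nat.card (Gt ⧸ G) : k)⁻¹) •
      ∑ q : Gt ⧸ G, (rho (G := G) (S := S) (Quotient.out q)) ∘ₗ πk ∘ₗ
        (rho (G := G) (S := S) (Quotient.out q)⁻¹) with hE
  have hE_apply : ∀ m, E m = ((Nat.card (Gt ⧸ G) : k)⁻¹) •
      ∑ q : Gt ⧸ G, rho (G := G) (Quotient.out q) (πk (rho (G := G) (Quotient.out q)⁻¹ m)) := by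
    intro m
    rw [hE]
    simp [LinearMap.sum_apply]
  have hEmem : ∀ m, E m ∈ N := by
    intro m
    rw [hE_apply]
    refine N.smul_of_tower_mem _ (Submodule.sum_mem N fun q _ => ?_)
    exact rho_mem N _ (hπmem _)
  have hEfix : ∀ m ∈ N, E m = m := by
    intro m hm
    rw [hE_apply]
    have hterm : ∀ q : Gt ⧸ G,
        rho (G := G) (Quotient.out q) (πk (rho (G := G) (Quotient.out q)⁻¹ m)) = m := by
      intro q
      rw [hπk_apply, hπfix _ (rho_mem N _ hm), rho_inv_self]
    rw [Finset.sum_congr rfl fun q _ => hterm q, Finset.sum_const, Finset.card_univ,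
      ← Nat.card_eq_fintype_card, ← Nat.cast_smul_eq_nsmul k, smul_smul,
      inv_mul_cancel₀ hc0, one_smul]
  have hEcomm : ∀ (g : Gt) (m : Ind k G S),
      E (rho (G := G) g m) = rho (G := G) g (E m) := by
    intro g m
    rw [hE_apply, hE_apply, map_smul, map_sum]
    congr 1
    refine Fintype.sum_equiv (Equiv.mulLeft (QuotientGroup.mk g : Gt ⧸ G))
      (fun q => rho (G := G) g
        (rho (G := G) (Quotient.out q) (πk (rho (G := G) (Quotient.out q)⁻¹ m))))
      (fun q => rho (G := G) (Quotient.out q) (πk (rho (G := G) (Quotient.out q)⁻¹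
        (rho (G := G) g m)))) (fun q₀ => ?_) |>.symm
    set v : Gt := Quotient.out q₀ with hv
    set u : Gt := Quotient.out ((QuotientGroup.mk g : Gt ⧸ G) * q₀) with hu
    have hmem : (g * v)⁻¹ * u ∈ G := by
      rw [← QuotientGroup.eq]
      show QuotientGroup.mk (g * v) = QuotientGroup.mk u
      rw [hu, hv, QuotientGroup.out_eq']
      show QuotientGroup.mk (g * Quotient.out q₀) = _
      rw [QuotientGroup.mk_mul, QuotientGroup.out_eq']
    set h : ↥G := ⟨(g * v)⁻¹ * u, hmem⟩ with hh
    have hu2 : u = g * v * ↑h := by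
      rw [hh]
      simp [mul_assoc]
    have hinv : u⁻¹ * g = ((h⁻¹ : ↥G) : Gt) * v⁻¹ := by
      rw [hu2]
      show _ = (↑h : Gt)⁻¹ * v⁻¹
      simp [mul_assoc]
    have huh : u * ((h⁻¹ : ↥G) : Gt) = g * v := by
      rw [hu2]
      show g * v * ↑h * (↑h : Gt)⁻¹ = g * v
      simp [mul_assoc]
    show rho (G := G) g (rho (G := G) v (πk (rho (G := G) v⁻¹ m)))
        = rho (G := G) u (πk (rho (G := G) u⁻¹ (rho (G := G) g m)))
    symm
    rw [rho_rho u⁻¹ g, hinv, ← rho_rho, hπk_apply, rho_comm_linear (G := G) π h⁻¹,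
      rho_rho, huh, ← rho_rho, ← hπk_apply]
  -- R-linearity of E
  have hER : ∀ (r : MonoidAlgebra k Gt) (m : Ind k G S), E (r • m) = r • E m := by
    intro r m
    induction r using MonoidAlgebra.induction with
    | zero =>
        rw [zero_smul, map_zero, zero_smul]
    | single_add g cc x' _ _ ih =>
        rw [add_smul, map_add, ih, add_smul]
        congr 1
        have hsingle : ∀ x : Ind k G S, (MonoidAlgebra.single g cc) • x
            = cc • (MonoidAlgebra.of k Gt g • x) := by
          intro x
          rw [MonoidAlgebra.of_apply, ← smul_assoc, MonoidAlgebra.smul_single', mul_one]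
        rw [hsingle, map_smul, ← rho_apply, hEcomm, rho_apply, hsingle]
  -- package as R-linear and conclude
  set Elin : Ind k G S →ₗ[MonoidAlgebra k Gt] Ind k G S :=
    { toFun := E
      map_add' := E.map_add
      map_smul' := hER } with hElin
  set F : Ind k G S →ₗ[MonoidAlgebra k Gt] ↥N := LinearMap.codRestrict N Elin hEmem with hF
  have hproj : ∀ x : ↥N, F ↑x = x := fun x => Subtype.ext (hEfix ↑x x.2)
  exact ⟨LinearMap.ker F, LinearMap.isCompl_of_proj hproj⟩
end

section
/- Every simple k[G̃]-module is isomorphic to a direct summand of an induced simple module: for every simple k[G̃]-module T there exists a simple k[G]-module s such that T is a direct summand of Ind_G^{G̃} s. -/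
/-!
STATEMENT 4: Every simple `k[G̃]`-module is isomorphic to a direct summand of an induced
simple module: for every simple `k[G̃]`-module `T` there exists a simple `k[G]`-module `s`
such that `T` is a direct summand of `Ind_G^{G̃} s`.

Context: `k` is an algebraically closed field of prime characteristic `p`; `G̃` is a
finite group with a normal subgroup `G` such that `G̃/G` has order coprime to `p`.
The induced module `Ind_G^{G̃} s = k[G̃] ⊗_{k[G]} s` is realised as the quotient of the
`k`-tensor product `k[G̃] ⊗_k s` by the `k[G̃]`-submodule generated by the balancing
relations.  `T` is a direct summand of `Ind_G^{G̃} s` iff there are `k[G̃]`-linear maps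
`ι : T → Ind_G^{G̃} s` and `π : Ind_G^{G̃} s → T` with `π ∘ ι = id`.
-/

open MonoidAlgebra

set_option linter.unusedSectionVars false
set_option maxHeartbeats 1000000

/-! ### Extra instances on `Ind` -/

noncomputable instance (k : Type*) [Field k] {Gt : Type*} [Group Gt] (G : Subgroup Gt)
    (S : Type*) [AddCommGroup S] [Module k S] [Module (MonoidAlgebra k ↥G) S]
    [IsScalarTower k (MonoidAlgebra k ↥G) S] : Module k (Ind k G S) :=
  Submodule.Quotient.module' (IndRel k G S)

instance (k : Type*) [Field k] {Gt : Type*} [Group Gt] (G : Subgroup Gt)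
    (S : Type*) [AddCommGroup S] [Module k S] [Module (MonoidAlgebra k ↥G) S]
    [IsScalarTower k (MonoidAlgebra k ↥G) S] :
    IsScalarTower k (MonoidAlgebra k Gt) (Ind k G S) := by
  constructor
  intro c a x
  obtain ⟨z, rfl⟩ := Submodule.Quotient.mk_surjective _ x
  show _ = c • a • (Submodule.Quotient.mk z : Ind k G S)
  exact congrArg Submodule.Quotient.mk (smul_assoc c a z)

section Aux

variable {k : Type} [Field k] {Gt : Type} [Group Gt] {G : Subgroup Gt}

lemma mdr_single {H H' : Type} [Group H] [Group H'] (f : H →* H') (σ : H) (c : k) :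
    mapDomainRingHom k f (single σ c) = single (f σ) c := by
  simp [mapDomainRingHom, Finsupp.mapDomain_single]

lemma res_algebraMap (c : k) :
    (mapDomainRingHom k G.subtype (algebraMap k (MonoidAlgebra k ↥G) c))
      = algebraMap k (MonoidAlgebra k Gt) c := by
  simp [MonoidAlgebra.coe_algebraMap]

lemma res_single (σ : ↥G) (c : k) :
    (mapDomainRingHom k G.subtype (single σ c) : MonoidAlgebra k Gt) = single (σ : Gt) c := by
  simp [mapDomainRingHom]

lemma single_smul_eq {M : Type} [AddCommGroup M] [Module (MonoidAlgebra k Gt) M]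
    [Module k M] [IsScalarTower k (MonoidAlgebra k Gt) M] (y : Gt) (c : k) (m : M) :
    (single y c : MonoidAlgebra k Gt) • m = c • (MonoidAlgebra.of k Gt y • m) := by
  have : (single y c : MonoidAlgebra k Gt) = c • (MonoidAlgebra.of k Gt y) := by
    simp [MonoidAlgebra.of_apply, Finsupp.smul_single]
  rw [this, smul_assoc]

/-- A `k`-additive map commuting with group elements is `k[Gt]`-linear. -/
lemma smul_of_comm {M N : Type} [AddCommGroup M] [Module (MonoidAlgebra k Gt) M]
    [Module k M] [IsScalarTower k (MonoidAlgebra k Gt) M]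
    [AddCommGroup N] [Module (MonoidAlgebra k Gt) N]
    [Module k N] [IsScalarTower k (MonoidAlgebra k Gt) N]
    (φ : M → N) (hadd : ∀ a b, φ (a + b) = φ a + φ b)
    (hk : ∀ (c : k) m, φ (c • m) = c • φ m)
    (hof : ∀ (y : Gt) m, φ (MonoidAlgebra.of k Gt y • m) = MonoidAlgebra.of k Gt y • φ m)
    (r : MonoidAlgebra k Gt) (m : M) : φ (r • m) = r • φ m := by
  induction r using MonoidAlgebra.induction with
  | zero => rw [zero_smul, zero_smul, ← add_right_cancel_iff (a := φ 0), ← hadd, add_zero, zero_add]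
  | single_add y c r hy hc ih =>
      rw [add_smul, add_smul, hadd, ih, single_smul_eq, hk, hof, ← single_smul_eq]

lemma smul_comm_kA {M : Type} [AddCommGroup M] [Module (MonoidAlgebra k Gt) M]
    [Module k M] [IsScalarTower k (MonoidAlgebra k Gt) M]
    (c : k) (a : MonoidAlgebra k Gt) (m : M) : a • (c • m) = c • (a • m) := by
  rw [← algebraMap_smul (MonoidAlgebra k Gt) c m, ← mul_smul, ← Algebra.commutes c a, mul_smul,
    algebraMap_smul]

variable {T : Type} [AddCommGroup T] [Module (MonoidAlgebra k Gt) T]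
variable [Module k T] [IsScalarTower k (MonoidAlgebra k Gt) T]
variable [Module (MonoidAlgebra k ↥G) T]
variable (hres : ∀ (a : MonoidAlgebra k ↥G) (t : T),
    a • t = (mapDomainRingHom k G.subtype a) • t)

lemma of_smul_cancel (x : Gt) (t : T) :
    MonoidAlgebra.of k Gt x⁻¹ • (MonoidAlgebra.of k Gt x • t) = t := by
  rw [← mul_smul, ← map_mul, inv_mul_cancel, map_one, one_smul]

lemma of_smul_cancel' (x : Gt) (t : T) :
    MonoidAlgebra.of k Gt x • (MonoidAlgebra.of k Gt x⁻¹ • t) = t := by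
  rw [← mul_smul, ← map_mul, mul_inv_cancel, map_one, one_smul]

include hres

lemma smul_k_eq (c : k) (t : T) : (algebraMap k (MonoidAlgebra k ↥G) c) • t = c • t := by
  rw [hres, res_algebraMap, algebraMap_smul]

lemma towerB : IsScalarTower k (MonoidAlgebra k ↥G) T := by
  constructor
  intro c a t
  rw [hres, hres, Algebra.smul_def, map_mul, res_algebraMap, mul_smul, algebraMap_smul]

lemma smul_of_subgroup (σ : ↥G) (t : T) :
    (single σ (1:k) : MonoidAlgebra k ↥G) • t = MonoidAlgebra.of k Gt (σ : Gt) • t := by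
  rw [hres, res_single]; rfl

lemma e_smul_k (e : T →ₗ[MonoidAlgebra k ↥G] T) (c : k) (t : T) : e (c • t) = c • e t := by
  rw [← smul_k_eq (G := G) hres, map_smul, smul_k_eq (G := G) hres]

end Aux

section Conj

variable {k : Type} [Field k] {Gt : Type} [Group Gt] {G : Subgroup Gt} [G.Normal]

/-- Conjugation as a monoid hom of the subgroup. -/
def cj (x : Gt) : ↥G →* ↥G where
  toFun σ := ⟨x * σ * x⁻¹, Subgroup.Normal.conj_mem ‹G.Normal› σ σ.2 x⟩
  map_one' := by ext; simp
  map_mul' σ τ := by ext; simp [mul_assoc]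

lemma cj_cj (x : Gt) (a : MonoidAlgebra k ↥G) :
    mapDomainRingHom k (cj (G := G) x) (mapDomainRingHom k (cj x⁻¹) a) = a := by
  induction a using MonoidAlgebra.induction_linear with
  | zero => simp
  | add a b ha hb => rw [map_add, map_add, ha, hb]
  | single σ c =>
      rw [mdr_single, mdr_single]
      congr 1
      ext
      simp [cj]
      group

lemma cj_mul_of (x : Gt) (a : MonoidAlgebra k ↥G) :
    (mapDomainRingHom k G.subtype (mapDomainRingHom k (cj x) a)) * MonoidAlgebra.of k Gt x
      = MonoidAlgebra.of k Gt x * mapDomainRingHom k G.subtype a := by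
  induction a using MonoidAlgebra.induction_linear with
  | zero => simp
  | add a b ha hb => simp only [map_add, add_mul, mul_add, ha, hb]
  | single σ c =>
      simp only [mdr_single, MonoidAlgebra.of_apply, MonoidAlgebra.single_mul_single,
        mul_one, one_mul]
      congr 1
      show x * ↑σ * x⁻¹ * x = x * ↑σ
      group

variable {T : Type} [AddCommGroup T] [Module (MonoidAlgebra k Gt) T]
variable [Module k T] [IsScalarTower k (MonoidAlgebra k Gt) T]
variable [Module (MonoidAlgebra k ↥G) T]
variable (hres : ∀ (a : MonoidAlgebra k ↥G) (t : T),
    a • t = (mapDomainRingHom k G.subtype a) • t)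

include hres in
lemma key_comm (x : Gt) (a : MonoidAlgebra k ↥G) (v : T) :
    MonoidAlgebra.of k Gt x • ((mapDomainRingHom k (cj x⁻¹) a) • v)
      = a • (MonoidAlgebra.of k Gt x • v) := by
  rw [hres, hres, ← mul_smul, ← mul_smul, ← cj_mul_of x (mapDomainRingHom k (cj x⁻¹) a),
    cj_cj]

/-- The conjugate of a `k[G]`-submodule of `T` by a group element. -/
def conjSub (x : Gt) (s : Submodule (MonoidAlgebra k ↥G) T) :
    Submodule (MonoidAlgebra k ↥G) T where
  carrier := (fun t => MonoidAlgebra.of k Gt x • t) '' s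
  add_mem' := by
    rintro a b ⟨v, hv, rfl⟩ ⟨w, hw, rfl⟩
    exact ⟨v + w, add_mem hv hw, by simp [smul_add]⟩
  zero_mem' := ⟨0, zero_mem _, smul_zero _⟩
  smul_mem' := by
    rintro a t ⟨v, hv, rfl⟩
    exact ⟨mapDomainRingHom k (cj x⁻¹) a • v, Submodule.smul_mem _ _ hv, key_comm hres x a v⟩

lemma mem_conjSub {x : Gt} {s : Submodule (MonoidAlgebra k ↥G) T} {t : T} :
    t ∈ conjSub hres x s ↔ ∃ v ∈ s, MonoidAlgebra.of k Gt x • v = t := Iff.rfl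

lemma conjSub_conjSub (x : Gt) (s : Submodule (MonoidAlgebra k ↥G) T) :
    conjSub hres x⁻¹ (conjSub hres x s) = s := by
  ext t
  constructor
  · rintro ⟨w, ⟨v, hv, rfl⟩, rfl⟩
    show MonoidAlgebra.of k Gt x⁻¹ • (MonoidAlgebra.of k Gt x • v) ∈ s
    rwa [of_smul_cancel]
  · intro ht
    exact ⟨MonoidAlgebra.of k Gt x • t, ⟨t, ht, rfl⟩, of_smul_cancel x t⟩

lemma conjSub_bot (x : Gt) : conjSub hres x (⊥ : Submodule (MonoidAlgebra k ↥G) T) = ⊥ := by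
  ext t
  constructor
  · rintro ⟨v, hv, rfl⟩
    have hv' : v = 0 := hv
    show MonoidAlgebra.of k Gt x • v ∈ (⊥ : Submodule (MonoidAlgebra k ↥G) T)
    rw [hv', smul_zero]
    exact Submodule.zero_mem _
  · intro ht
    have ht' : t = (0 : T) := ht
    exact ⟨0, Submodule.zero_mem _, by simp [ht', smul_zero]⟩

lemma conjSub_mono (x : Gt) {s s' : Submodule (MonoidAlgebra k ↥G) T} (h : s ≤ s') :
    conjSub hres x s ≤ conjSub hres x s' := by
  rintro t ⟨v, hv, rfl⟩; exact ⟨v, h hv, rfl⟩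

lemma conjSub_conjSub' (x : Gt) (W : Submodule (MonoidAlgebra k ↥G) T) :
    conjSub hres x (conjSub hres x⁻¹ W) = W := by
  have := conjSub_conjSub hres x⁻¹ W
  rwa [inv_inv] at this

lemma isAtom_conjSub (x : Gt) {s : Submodule (MonoidAlgebra k ↥G) T} (h : IsAtom s) :
    IsAtom (conjSub hres x s) := by
  constructor
  · intro hbot
    apply h.1
    rw [← conjSub_conjSub hres x s, hbot, conjSub_bot]
  · intro W hW
    have h1 : conjSub hres x⁻¹ W ≤ s := by
      rw [← conjSub_conjSub hres x s]; exact conjSub_mono hres _ hW.le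
    have h2 : conjSub hres x⁻¹ W ≠ s := fun he => hW.ne (by
      rw [← conjSub_conjSub' hres x W, he])
    have h3 := h.2 _ (lt_of_le_of_ne h1 h2)
    rw [← conjSub_conjSub' hres x W, h3, conjSub_bot]

include hres in
theorem resSemisimple [Fintype Gt] [IsSimpleModule (MonoidAlgebra k Gt) T] :
    IsSemisimpleModule (MonoidAlgebra k ↥G) T := by
  haveI := towerB (T := T) (G := G) hres
  haveI : Nontrivial T := IsSimpleModule.nontrivial (MonoidAlgebra k Gt) T
  obtain ⟨t₀, ht₀⟩ := exists_ne (0 : T)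
  haveI : Module.Finite (MonoidAlgebra k Gt) T := by
    constructor
    have : Submodule.span (MonoidAlgebra k Gt) {t₀} = ⊤ := by
      refine (eq_bot_or_eq_top _).resolve_left ?_
      simpa [Submodule.span_singleton_eq_bot] using ht₀
    rw [← this]
    exact Submodule.fg_span_singleton t₀
  haveI : Module.Finite k (MonoidAlgebra k Gt) :=
    Module.Finite.equiv (MonoidAlgebra.coeffLinearEquiv k).symm
  haveI : Module.Finite k T := Module.Finite.trans (MonoidAlgebra k Gt) T
  haveI : IsArtinian (MonoidAlgebra k ↥G) T := isArtinian_of_tower k inferInstance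
  haveI : IsAtomic (Submodule (MonoidAlgebra k ↥G) T) :=
    isAtomic_of_orderBot_wellFounded_lt wellFounded_lt
  obtain ⟨s₀, hs₀⟩ : ∃ s₀ : Submodule (MonoidAlgebra k ↥G) T, IsAtom s₀ := by
    rcases eq_bot_or_exists_atom_le (⊤ : Submodule (MonoidAlgebra k ↥G) T) with h | ⟨a, ha, -⟩
    · exact absurd (h ▸ Submodule.mem_top (x := t₀) (R := MonoidAlgebra k ↥G)) (by
        rw [Submodule.mem_bot]; exact ht₀)
    · exact ⟨a, ha⟩
  set p : Gt → Submodule (MonoidAlgebra k ↥G) T := fun x => conjSub hres x s₀ with hp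
  have hatom : ∀ x, IsAtom (p x) := fun x => isAtom_conjSub hres x hs₀
  have hcl : ∀ (y : Gt) (u : T), u ∈ (⨆ x, p x) → MonoidAlgebra.of k Gt y • u ∈ (⨆ x, p x) := by
    intro y u hu
    refine Submodule.iSup_induction p (motive := fun u => MonoidAlgebra.of k Gt y • u ∈ ⨆ x, p x)
      hu ?_ ?_ ?_
    · intro x v hv
      obtain ⟨w, hw, rfl⟩ := (mem_conjSub hres).1 hv
      refine Submodule.mem_iSup_of_mem (y * x) ((mem_conjSub hres).2 ⟨w, hw, ?_⟩)
      rw [← mul_smul, ← map_mul]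
    · show MonoidAlgebra.of k Gt y • (0:T) ∈ ⨆ x, p x
      rw [smul_zero]; exact Submodule.zero_mem _
    · intro a b ha hb
      show MonoidAlgebra.of k Gt y • (a + b) ∈ ⨆ x, p x
      rw [smul_add]; exact Submodule.add_mem _ ha hb
  let UA : Submodule (MonoidAlgebra k Gt) T :=
    { carrier := (⨆ x, p x : Submodule (MonoidAlgebra k ↥G) T)
      add_mem' := fun ha hb => Submodule.add_mem _ ha hb
      zero_mem' := Submodule.zero_mem _
      smul_mem' := by
        intro r u hu
        induction r using MonoidAlgebra.induction with
        | zero => rw [zero_smul]; exact Submodule.zero_mem _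
        | single_add y c r hy hc ih =>
            rw [add_smul]
            refine Submodule.add_mem _ ?_ ih
            rw [single_smul_eq, ← smul_k_eq (T := T) (G := G) hres]
            exact Submodule.smul_mem _ _ (hcl y u hu) }
  have h1 : Submodule.span (MonoidAlgebra k Gt) (s₀ : Set T) = ⊤ := by
    refine (eq_bot_or_eq_top _).resolve_left ?_
    obtain ⟨v, hv, hv0⟩ := Submodule.exists_mem_ne_zero_of_ne_bot hs₀.1
    intro h
    have := Submodule.subset_span (R := MonoidAlgebra k Gt) hv
    rw [h] at this
    exact hv0 (by simpa using this)
  have h2 : Submodule.span (MonoidAlgebra k Gt) (s₀ : Set T) ≤ UA := by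
    refine Submodule.span_le.2 fun v hv => ?_
    show v ∈ (⨆ x, p x : Submodule (MonoidAlgebra k ↥G) T)
    exact Submodule.mem_iSup_of_mem 1 ((mem_conjSub hres).2 ⟨v, hv, by rw [map_one, one_smul]⟩)
  have hsup : (⨆ x, p x) = ⊤ := by
    rw [eq_top_iff]
    intro u _
    exact h2 (h1 ▸ Submodule.mem_top (R := MonoidAlgebra k Gt))
  haveI : ∀ x, IsSimpleModule (MonoidAlgebra k ↥G) (p x) :=
    fun x => isSimpleModule_iff_isAtom.2 (hatom x)
  exact isSemisimpleModule_of_isSemisimpleModule_submodule' (fun x => inferInstance) hsup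

include hres in
lemma artinianB [Fintype Gt] [IsSimpleModule (MonoidAlgebra k Gt) T] :
    IsArtinian (MonoidAlgebra k ↥G) T := by
  haveI := towerB (T := T) (G := G) hres
  haveI : Nontrivial T := IsSimpleModule.nontrivial (MonoidAlgebra k Gt) T
  obtain ⟨t₀, ht₀⟩ := exists_ne (0 : T)
  haveI : Module.Finite (MonoidAlgebra k Gt) T := by
    constructor
    have : Submodule.span (MonoidAlgebra k Gt) {t₀} = ⊤ := by
      refine (eq_bot_or_eq_top _).resolve_left ?_
      simpa [Submodule.span_singleton_eq_bot] using ht₀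
    rw [← this]
    exact Submodule.fg_span_singleton t₀
  haveI : Module.Finite k (MonoidAlgebra k Gt) :=
    Module.Finite.equiv (MonoidAlgebra.coeffLinearEquiv k).symm
  haveI : Module.Finite k T := Module.Finite.trans (MonoidAlgebra k Gt) T
  exact isArtinian_of_tower k inferInstance

end Conj

section Avg

variable {k : Type} [Field k] {Gt : Type} [Group Gt] {G : Subgroup Gt} [G.Normal]
variable {T : Type} [AddCommGroup T] [Module (MonoidAlgebra k Gt) T]
variable [Module k T] [IsScalarTower k (MonoidAlgebra k Gt) T]
variable [Module (MonoidAlgebra k ↥G) T]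
variable (hres : ∀ (a : MonoidAlgebra k ↥G) (t : T),
    a • t = (mapDomainRingHom k G.subtype a) • t)

include hres

/-- coset independence of the conjugation terms -/
lemma conj_term_coset (e : T →ₗ[MonoidAlgebra k ↥G] T) (x g : Gt) (hg : g ∈ G) (t : T) :
    MonoidAlgebra.of k Gt (x * g) • e (MonoidAlgebra.of k Gt (x * g)⁻¹ • t)
      = MonoidAlgebra.of k Gt x • e (MonoidAlgebra.of k Gt x⁻¹ • t) := by
  have h1 : MonoidAlgebra.of k Gt (x * g)⁻¹ • t
      = MonoidAlgebra.of k Gt ((⟨g, hg⟩ : ↥G)⁻¹ : ↥G) • (MonoidAlgebra.of k Gt x⁻¹ • t) := by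
    rw [← mul_smul, ← map_mul, mul_inv_rev]
    rfl
  have hxg : x * g * (((⟨g, hg⟩ : ↥G)⁻¹ : ↥G) : Gt) = x := by
    show x * g * g⁻¹ = x
    group
  rw [h1, ← smul_of_subgroup hres, map_smul, smul_of_subgroup hres, ← mul_smul, ← map_mul, hxg]

variable [Fintype (Gt ⧸ G)]

/-- Averaging of a `k[G]`-endomorphism over coset representatives. -/
noncomputable def AvFun (e : T →ₗ[MonoidAlgebra k ↥G] T) : T → T := fun t =>
  ∑ c : Gt ⧸ G, MonoidAlgebra.of k Gt c.out • e (MonoidAlgebra.of k Gt c.out⁻¹ • t)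

omit hres in
lemma AvFun_add (e : T →ₗ[MonoidAlgebra k ↥G] T) (t t' : T) :
    AvFun e (t + t') = AvFun e t + AvFun e t' := by
  simp only [AvFun]
  rw [← Finset.sum_add_distrib]
  refine Finset.sum_congr rfl fun c _ => ?_
  rw [smul_add, map_add, smul_add]

lemma AvFun_k (e : T →ₗ[MonoidAlgebra k ↥G] T) (c : k) (t : T) :
    AvFun e (c • t) = c • AvFun e t := by
  simp only [AvFun]
  rw [Finset.smul_sum]
  refine Finset.sum_congr rfl fun d _ => ?_
  rw [smul_comm_kA, e_smul_k hres, smul_comm_kA]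

lemma AvFun_of (e : T →ₗ[MonoidAlgebra k ↥G] T) (y : Gt) (t : T) :
    AvFun e (MonoidAlgebra.of k Gt y • t) = MonoidAlgebra.of k Gt y • AvFun e t := by
  simp only [AvFun]
  rw [Finset.smul_sum]
  rw [← Equiv.sum_comp (MulAction.toPerm y : Equiv.Perm (Gt ⧸ G))
    (fun c => MonoidAlgebra.of k Gt c.out • e (MonoidAlgebra.of k Gt c.out⁻¹
      • (MonoidAlgebra.of k Gt y • t)))]
  refine Finset.sum_congr rfl fun d _ => ?_
  show MonoidAlgebra.of k Gt (y • d).out • e (MonoidAlgebra.of k Gt ((y • d).out)⁻¹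
      • (MonoidAlgebra.of k Gt y • t))
    = MonoidAlgebra.of k Gt y • (MonoidAlgebra.of k Gt d.out
      • e (MonoidAlgebra.of k Gt d.out⁻¹ • t))
  have hgmem : (y * d.out)⁻¹ * (y • d).out ∈ G := by
    rw [← QuotientGroup.eq]
    have h1 : QuotientGroup.mk (y * d.out) = y • d := by
      rw [← smul_eq_mul]
      exact MulAction.Quotient.mk_smul_out G y d
    rw [h1, QuotientGroup.out_eq']
  have hout : (y • d).out = (y * d.out) * ((y * d.out)⁻¹ * (y • d).out) := by group
  rw [hout]
  rw [conj_term_coset hres e (y * d.out) _ hgmem]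
  have h2 : (y * d.out)⁻¹ = d.out⁻¹ * y⁻¹ := by group
  rw [h2, map_mul, map_mul, mul_smul, mul_smul]
  rw [show MonoidAlgebra.of k Gt y⁻¹ • (MonoidAlgebra.of k Gt y • t) = t from by
    rw [← mul_smul, ← map_mul, inv_mul_cancel, map_one, one_smul]]

/-- The averaged endomorphism, as a `k[Gt]`-linear map. -/
noncomputable def Av (e : T →ₗ[MonoidAlgebra k ↥G] T) : T →ₗ[MonoidAlgebra k Gt] T where
  toFun := AvFun e
  map_add' := AvFun_add e
  map_smul' r t := smul_of_comm (AvFun e) (AvFun_add e) (AvFun_k hres e)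
    (AvFun_of hres e) r t

lemma Av_apply (e : T →ₗ[MonoidAlgebra k ↥G] T) (t : T) :
    Av hres e t = ∑ c : Gt ⧸ G,
      MonoidAlgebra.of k Gt c.out • e (MonoidAlgebra.of k Gt c.out⁻¹ • t) := rfl

lemma Av_add (e e' : T →ₗ[MonoidAlgebra k ↥G] T) :
    Av hres (e + e') = Av hres e + Av hres e' := by
  refine LinearMap.ext fun t => ?_
  show AvFun (e + e') t = AvFun e t + AvFun e' t
  simp only [AvFun, LinearMap.add_apply, smul_add, Finset.sum_add_distrib]

lemma Av_id (t : T) :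
    Av hres (LinearMap.id : T →ₗ[MonoidAlgebra k ↥G] T) t = (Fintype.card (Gt ⧸ G)) • t := by
  rw [Av_apply]
  rw [Finset.sum_congr rfl fun (c : Gt ⧸ G) _ => by
    rw [LinearMap.id_apply, of_smul_cancel' c.out t]]
  rw [Finset.sum_const, Finset.card_univ]

include hres in
theorem exists_simple_q [Fintype Gt] [IsSimpleModule (MonoidAlgebra k Gt) T]
    (hsemi : IsSemisimpleModule (MonoidAlgebra k ↥G) T)
    (W : Submodule (MonoidAlgebra k ↥G) T) :
    ∀ (e : T →ₗ[MonoidAlgebra k ↥G] T), LinearMap.range e ≤ W → Av hres e ≠ 0 →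
    ∃ (s : Submodule (MonoidAlgebra k ↥G) T) (q : T →ₗ[MonoidAlgebra k ↥G] s),
      IsSimpleModule (MonoidAlgebra k ↥G) s ∧ Av hres (s.subtype ∘ₗ q) ≠ 0 := by
  haveI : IsArtinian (MonoidAlgebra k ↥G) T := artinianB hres
  haveI : IsAtomic (Submodule (MonoidAlgebra k ↥G) T) :=
    isAtomic_of_orderBot_wellFounded_lt wellFounded_lt
  induction W using WellFoundedLT.induction with
  | _ W ih =>
  intro e hrange hAv
  have hW : W ≠ ⊥ := by
    rintro rfl
    have he : e = 0 := by
      refine LinearMap.ext fun t => ?_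
      have := hrange (LinearMap.mem_range_self e t)
      simpa using this
    rw [he] at hAv
    apply hAv
    have h0 : (0 : T →ₗ[MonoidAlgebra k ↥G] T) + 0 = 0 := by simp
    have := Av_add (T := T) (G := G) hres 0 0
    rw [h0] at this
    exact left_eq_add.mp this
  obtain ⟨s, hs, hsW⟩ := (eq_bot_or_exists_atom_le W).resolve_left hW
  obtain ⟨D, hD⟩ := exists_isCompl s
  set pr := Submodule.projectionOnto s D hD with hpr
  set e₁ : T →ₗ[MonoidAlgebra k ↥G] T := s.subtype ∘ₗ (pr ∘ₗ e) with he₁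
  set e₂ : T →ₗ[MonoidAlgebra k ↥G] T := e - e₁ with he₂
  have hsum : e₁ + e₂ = e := by rw [he₂]; abel
  by_cases h1 : Av hres e₁ ≠ 0
  · exact ⟨s, pr ∘ₗ e, isSimpleModule_iff_isAtom.2 hs, h1⟩
  · push_neg at h1
    have h2 : Av hres e₂ ≠ 0 := by
      intro h2
      apply hAv
      rw [← hsum, Av_add (T := T) (G := G) hres, h1, h2, add_zero]
    have hrange₂ : LinearMap.range e₂ ≤ W ⊓ D := by
      rintro t ⟨u, rfl⟩
      constructor
      · have h3 : e u ∈ W := hrange (LinearMap.mem_range_self e u)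
        have h4 : (↑(pr (e u)) : T) ∈ W := hsW (pr (e u)).2
        show e u - _ ∈ W
        exact sub_mem h3 h4
      · show e u - ↑(pr (e u)) ∈ D
        rw [← Submodule.projectionOnto_apply_eq_zero_iff hD, map_sub,
          Submodule.projectionOnto_apply_left hD (pr (e u)), sub_self]
    have hlt : W ⊓ D < W := by
      refine lt_of_le_of_ne inf_le_left ?_
      intro heq
      have hsD : s ≤ D := le_trans (heq ▸ hsW) inf_le_right
      have : s ≤ s ⊓ D := le_inf le_rfl hsD
      rw [hD.inf_eq_bot] at this
      exact hs.1 (le_bot_iff.mp this)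
    exact ih (W ⊓ D) hlt e₂ hrange₂ h2

end Avg

section Maps

variable {k : Type} [Field k] {Gt : Type} [Group Gt] {G : Subgroup Gt} [G.Normal]
variable {T : Type} [AddCommGroup T] [Module (MonoidAlgebra k Gt) T]
variable [Module k T] [IsScalarTower k (MonoidAlgebra k Gt) T]
variable [Module (MonoidAlgebra k ↥G) T] [IsScalarTower k (MonoidAlgebra k ↥G) T]
variable (hres : ∀ (a : MonoidAlgebra k ↥G) (t : T),
    a • t = (mapDomainRingHom k G.subtype a) • t)
variable {S : Type} [AddCommGroup S] [Module k S] [Module (MonoidAlgebra k ↥G) S]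
    [IsScalarTower k (MonoidAlgebra k ↥G) S]

instance : SMulCommClass k (MonoidAlgebra k Gt) T :=
  ⟨fun c a t => (smul_comm_kA c a t).symm⟩

/-- the multiplication-action map `k[Gt] ⊗ₖ S → T`. -/
noncomputable def piAux (j : S →ₗ[MonoidAlgebra k ↥G] T) :
    TensorProduct k (MonoidAlgebra k Gt) S →ₗ[MonoidAlgebra k Gt] T :=
  TensorProduct.AlgebraTensorModule.lift
    (LinearMap.toSpanSingleton (MonoidAlgebra k Gt) (S →ₗ[k] T)
      (LinearMap.restrictScalars k j))

lemma piAux_tmul (j : S →ₗ[MonoidAlgebra k ↥G] T) (x : MonoidAlgebra k Gt) (v : S) :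
    piAux j (x ⊗ₜ[k] v) = x • (j v) := by
  simp [piAux]

include hres in
lemma piAux_ker (j : S →ₗ[MonoidAlgebra k ↥G] T) :
    IndRel k G S ≤ LinearMap.ker (piAux j) := by
  rw [IndRel, Submodule.span_le]
  rintro z ⟨x, a, v, rfl⟩
  rw [SetLike.mem_coe, LinearMap.mem_ker, map_sub, piAux_tmul, piAux_tmul, map_smul,
    hres a (j v), mul_smul, sub_self]

/-- `Ind S → T` induced by a `k[G]`-map `S → T`. -/
noncomputable def piInd (j : S →ₗ[MonoidAlgebra k ↥G] T) :
    Ind k G S →ₗ[MonoidAlgebra k Gt] T :=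
  Submodule.liftQ _ (piAux j) (piAux_ker hres j)

lemma piInd_mk (j : S →ₗ[MonoidAlgebra k ↥G] T) (x : MonoidAlgebra k Gt) (v : S) :
    piInd hres j (Submodule.Quotient.mk (x ⊗ₜ[k] v)) = x • (j v) :=
  piAux_tmul j x v

lemma ind_mk_k_smul (c : k) (z : TensorProduct k (MonoidAlgebra k Gt) S) :
    (Submodule.Quotient.mk (c • z) : Ind k G S) = c • Submodule.Quotient.mk z :=
  Submodule.Quotient.mk_smul _ _ _

lemma ind_mk_A_smul (a : MonoidAlgebra k Gt) (z : TensorProduct k (MonoidAlgebra k Gt) S) :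
    (Submodule.Quotient.mk (a • z) : Ind k G S) = a • Submodule.Quotient.mk z := by
  rw [Submodule.Quotient.mk_smul]

lemma mk_rel (x : MonoidAlgebra k Gt) (a : MonoidAlgebra k ↥G) (v : S) :
    (Submodule.Quotient.mk ((x * mapDomainRingHom k G.subtype a) ⊗ₜ[k] v) : Ind k G S)
      = Submodule.Quotient.mk (x ⊗ₜ[k] (a • v)) := by
  rw [Submodule.Quotient.eq]
  exact Submodule.subset_span ⟨x, a, v, rfl⟩

variable [Fintype (Gt ⧸ G)]

/-- The would-be section `T → Ind S` attached to a `k[G]`-map `q : T → S`. -/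
noncomputable def iotaFun (q : T →ₗ[MonoidAlgebra k ↥G] S) : T → Ind k G S := fun t =>
  ∑ c : Gt ⧸ G, Submodule.Quotient.mk
    (MonoidAlgebra.of k Gt c.out ⊗ₜ[k] q (MonoidAlgebra.of k Gt c.out⁻¹ • t))

include hres in
lemma iota_term_coset (q : T →ₗ[MonoidAlgebra k ↥G] S) (x g : Gt) (hg : g ∈ G) (t : T) :
    (Submodule.Quotient.mk (MonoidAlgebra.of k Gt (x * g)
        ⊗ₜ[k] q (MonoidAlgebra.of k Gt (x * g)⁻¹ • t)) : Ind k G S)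
      = Submodule.Quotient.mk (MonoidAlgebra.of k Gt x
        ⊗ₜ[k] q (MonoidAlgebra.of k Gt x⁻¹ • t)) := by
  have h1 : MonoidAlgebra.of k Gt (x * g)⁻¹ • t
      = (single ((⟨g, hg⟩ : ↥G)⁻¹) (1:k) : MonoidAlgebra k ↥G)
          • (MonoidAlgebra.of k Gt x⁻¹ • t) := by
    rw [smul_of_subgroup hres, ← mul_smul, ← map_mul]
    congr 2
    show (x * g)⁻¹ = g⁻¹ * x⁻¹
    group
  have h2 : MonoidAlgebra.of k Gt (x * g)
      = MonoidAlgebra.of k Gt x * mapDomainRingHom k G.subtype (single (⟨g, hg⟩ : ↥G) (1:k)) := by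
    rw [res_single, MonoidAlgebra.of_apply, MonoidAlgebra.of_apply,
      MonoidAlgebra.single_mul_single, mul_one]
  rw [h1, map_smul, h2, mk_rel, ← mul_smul, MonoidAlgebra.single_mul_single, mul_one]
  rw [show (⟨g, hg⟩ : ↥G) * (⟨g, hg⟩ : ↥G)⁻¹ = 1 from mul_inv_cancel _]
  rw [← MonoidAlgebra.one_def, one_smul]

omit hres in
lemma iotaFun_add (q : T →ₗ[MonoidAlgebra k ↥G] S) (t t' : T) :
    iotaFun q (t + t') = iotaFun q t + iotaFun q t' := by
  simp only [iotaFun]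
  erw [← Finset.sum_add_distrib]
  refine Finset.sum_congr rfl fun c _ => ?_
  rw [smul_add, map_add, TensorProduct.tmul_add, Submodule.Quotient.mk_add]
  rfl

include hres in
lemma iotaFun_k (q : T →ₗ[MonoidAlgebra k ↥G] S) (c : k) (t : T) :
    iotaFun q (c • t) = c • iotaFun q t := by
  simp only [iotaFun]
  erw [Finset.smul_sum]
  refine Finset.sum_congr rfl fun d _ => ?_
  rw [smul_comm_kA]
  rw [show q (c • (MonoidAlgebra.of k Gt d.out⁻¹ • t))
      = c • q (MonoidAlgebra.of k Gt d.out⁻¹ • t) from by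
    rw [← smul_k_eq (G := G) hres c, map_smul, algebraMap_smul]]
  rw [TensorProduct.tmul_smul, ind_mk_k_smul]
  rfl

include hres in
lemma iotaFun_of (q : T →ₗ[MonoidAlgebra k ↥G] S) (y : Gt) (t : T) :
    iotaFun q (MonoidAlgebra.of k Gt y • t) = MonoidAlgebra.of k Gt y • iotaFun q t := by
  simp only [iotaFun]
  erw [Finset.smul_sum]
  erw [← Equiv.sum_comp (MulAction.toPerm y : Equiv.Perm (Gt ⧸ G))
    (fun c => (Submodule.Quotient.mk (MonoidAlgebra.of k Gt c.out
      ⊗ₜ[k] q (MonoidAlgebra.of k Gt c.out⁻¹ • (MonoidAlgebra.of k Gt y • t))) : Ind k G S))]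
  refine Finset.sum_congr rfl fun d _ => ?_
  show (Submodule.Quotient.mk (MonoidAlgebra.of k Gt (y • d).out
      ⊗ₜ[k] q (MonoidAlgebra.of k Gt ((y • d).out)⁻¹
        • (MonoidAlgebra.of k Gt y • t))) : Ind k G S)
    = MonoidAlgebra.of k Gt y • Submodule.Quotient.mk (MonoidAlgebra.of k Gt d.out
      ⊗ₜ[k] q (MonoidAlgebra.of k Gt d.out⁻¹ • t))
  have hgmem : (y * d.out)⁻¹ * (y • d).out ∈ G := by
    rw [← QuotientGroup.eq]
    have h1 : QuotientGroup.mk (y * d.out) = y • d := by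
      rw [← smul_eq_mul]
      exact MulAction.Quotient.mk_smul_out G y d
    rw [h1, QuotientGroup.out_eq']
  have hout : (y • d).out = (y * d.out) * ((y * d.out)⁻¹ * (y • d).out) := by group
  rw [hout]
  rw [iota_term_coset hres q (y * d.out) _ hgmem]
  have h2 : (y * d.out)⁻¹ = d.out⁻¹ * y⁻¹ := by group
  rw [h2, map_mul (MonoidAlgebra.of k Gt) ((Quotient.out d)⁻¹) y⁻¹, mul_smul]
  rw [show MonoidAlgebra.of k Gt y⁻¹ • (MonoidAlgebra.of k Gt y • t) = t from by
    rw [← mul_smul, ← map_mul, inv_mul_cancel, map_one, one_smul]]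
  erw [← ind_mk_A_smul]
  congr 1
  rw [TensorProduct.smul_tmul', smul_eq_mul, ← map_mul]

/-- The section `T → Ind S`, as a `k[Gt]`-linear map. -/
noncomputable def iotaInd (q : T →ₗ[MonoidAlgebra k ↥G] S) :
    T →ₗ[MonoidAlgebra k Gt] Ind k G S where
  toFun := iotaFun q
  map_add' := iotaFun_add q
  map_smul' r t := smul_of_comm (iotaFun q) (iotaFun_add q) (iotaFun_k hres q)
    (iotaFun_of hres q) r t

include hres in
lemma pi_comp_iota (j : S →ₗ[MonoidAlgebra k ↥G] T) (q : T →ₗ[MonoidAlgebra k ↥G] S)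
    [Fintype (Gt ⧸ G)] (t : T) :
    piInd hres j (iotaInd hres q t) = Av hres (j ∘ₗ q) t := by
  show piInd hres j (iotaFun q t) = _
  rw [iotaFun]
  erw [map_sum]
  rw [Av_apply]
  refine Finset.sum_congr rfl fun c _ => ?_
  rw [piInd_mk]
  rfl

end Maps

theorem simple_is_summand_of_ind_simple
    (k : Type) [Field k] [IsAlgClosed k] (p : ℕ) [Fact p.Prime] [CharP k p]
    (Gt : Type) [Group Gt] [Fintype Gt] (G : Subgroup Gt) [G.Normal]
    (hp : (Nat.card (Gt ⧸ G)).Coprime p)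
    (T : Type) [AddCommGroup T] [Module (MonoidAlgebra k Gt) T]
    [IsSimpleModule (MonoidAlgebra k Gt) T] :
    ∃ (s : Type) (_ : AddCommGroup s) (_ : Module k s)
      (_ : Module (MonoidAlgebra k ↥G) s) (_ : IsScalarTower k (MonoidAlgebra k ↥G) s),
      IsSimpleModule (MonoidAlgebra k ↥G) s ∧
      ∃ (ι : T →ₗ[MonoidAlgebra k Gt] Ind k G s)
        (π : Ind k G s →ₗ[MonoidAlgebra k Gt] T),
        π ∘ₗ ι = LinearMap.id := by
  classical
  -- set up the restricted module structures on T
  letI : Module k T := Module.compHom T (algebraMap k (MonoidAlgebra k Gt))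
  haveI : IsScalarTower k (MonoidAlgebra k Gt) T := by
    constructor
    intro c a t
    rw [Algebra.smul_def, mul_smul]
    rfl
  letI : Module (MonoidAlgebra k ↥G) T :=
    Module.compHom T (mapDomainRingHom k G.subtype)
  have hres : ∀ (a : MonoidAlgebra k ↥G) (t : T),
      a • t = (mapDomainRingHom k G.subtype a) • t := fun _ _ => rfl
  haveI : IsScalarTower k (MonoidAlgebra k ↥G) T := towerB hres
  haveI : IsSemisimpleModule (MonoidAlgebra k ↥G) T := resSemisimple hres
  letI : Fintype (Gt ⧸ G) := Fintype.ofFinite _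
  -- the cardinality is nonzero in k
  have hcard : ((Fintype.card (Gt ⧸ G) : k)) ≠ 0 := by
    rw [Ne, CharP.cast_eq_zero_iff k p]
    intro hdvd
    have h1 : p ∣ Nat.gcd (Nat.card (Gt ⧸ G)) p := by
      refine Nat.dvd_gcd ?_ dvd_rfl
      rwa [Nat.card_eq_fintype_card]
    rw [hp.gcd_eq_one] at h1
    exact (Fact.out : p.Prime).ne_one (Nat.dvd_one.mp h1)
  haveI : Nontrivial T := IsSimpleModule.nontrivial (MonoidAlgebra k Gt) T
  obtain ⟨t₀, ht₀⟩ := exists_ne (0 : T)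
  have hAvId : Av hres (LinearMap.id : T →ₗ[MonoidAlgebra k ↥G] T) ≠ 0 := by
    intro h
    have h1 := Av_id hres t₀
    rw [h, LinearMap.zero_apply] at h1
    have h2 : ((Fintype.card (Gt ⧸ G) : k)) • t₀ = 0 := by
      rw [Nat.cast_smul_eq_nsmul k, ← h1]
    have h3 : t₀ = 0 := by
      have h4 := congrArg (fun u => ((Fintype.card (Gt ⧸ G) : k))⁻¹ • u) h2
      simpa [smul_smul, inv_mul_cancel₀ hcard] using h4
    exact ht₀ h3
  obtain ⟨s, q, hsimple, hAv⟩ :=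
    exists_simple_q hres ‹IsSemisimpleModule (MonoidAlgebra k ↥G) T› ⊤
      LinearMap.id le_top hAvId
  have hbij : Function.Bijective (Av hres (s.subtype ∘ₗ q)) :=
    LinearMap.bijective_of_ne_zero hAv
  set eqv := LinearEquiv.ofBijective _ hbij with heqv
  refine ⟨↥s, inferInstance, inferInstance, inferInstance, inferInstance, hsimple,
    iotaInd hres q, eqv.symm.toLinearMap ∘ₗ piInd hres s.subtype, ?_⟩
  refine LinearMap.ext fun t => ?_
  show eqv.symm (piInd hres s.subtype (iotaInd hres q t)) = t
  rw [pi_comp_iota hres]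
  rw [show Av hres (s.subtype ∘ₗ q) t = eqv t from rfl, LinearEquiv.symm_apply_apply]
end
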